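/- Every S_n-equivariant k-linear map F : V^{⊗a} → V^{⊗b} is a k-linear combination of the maps T_P, where P ranges over the partition diagrams of type (a,b). (Fullness of the functor Φ_n from the partition category to S_n-modules.) -/

import Mathlib

open scoped Classical

/-- A partition diagram of type `(a,b)`: a set partition of `Fin a ⊕ Fin b`
into nonempty blocks. -/
abbrev PartitionDiagram (a b : ℕ) :=
  Finpartition (Finset.univ : Finset (Fin a ⊕ Fin b))

/-- `Sum.elim f g` is constant on every block of `P`. -/
def Compatible {n a b : ℕ} (P : PartitionDiagram a b)
    (f : Fin a → Fin n) (g : Fin b → Fin n) : Prop :=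
  ∀ B ∈ P.parts, ∀ x ∈ B, ∀ y ∈ B, Sum.elim f g x = Sum.elim f g y

/-- The linear map `T_P : V^{⊗a} → V^{⊗b}` associated to a partition diagram `P`,
where `V^{⊗a}` is modelled as the free module on `Fin a → Fin n`, with basis vector
at `f` corresponding to `e_{f(1)} ⊗ ⋯ ⊗ e_{f(a)}`. -/
noncomputable def TP (k : Type*) [CommRing k] (n : ℕ) {a b : ℕ}
    (P : PartitionDiagram a b) :
    ((Fin a → Fin n) → k) →ₗ[k] ((Fin b → Fin n) → k) where
  toFun x g := ∑ f : Fin a → Fin n, if Compatible P f g then x f else 0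
  map_add' x y := by
    funext g
    simp only [Pi.add_apply]
    rw [← Finset.sum_add_distrib]
    exact Finset.sum_congr rfl fun f _ => by split <;> simp
  map_smul' c x := by
    funext g
    simp only [Pi.smul_apply, smul_eq_mul, RingHom.id_apply]
    rw [Finset.mul_sum]
    exact Finset.sum_congr rfl fun f _ => by split <;> simp

/-- The (diagonal) action of `σ ∈ S_n` on `V^{⊗a}`: on basis vectors it sends
`e_{f(1)} ⊗ ⋯ ⊗ e_{f(a)}` to `e_{σ(f(1))} ⊗ ⋯ ⊗ e_{σ(f(a))}`. -/
def permMap (k : Type*) [CommRing k] {n a : ℕ} (σ : Equiv.Perm (Fin n)) :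
    ((Fin a → Fin n) → k) →ₗ[k] ((Fin a → Fin n) → k) where
  toFun x f := x fun i => σ⁻¹ (f i)
  map_add' _ _ := rfl
  map_smul' _ _ := rfl


section Aux

variable {k : Type*} [CommRing k] {n a b : ℕ}

/-- The kernel partition of a function `h : Fin a ⊕ Fin b → Fin n`. -/
noncomputable def kerP {n a b : ℕ} (h : Fin a ⊕ Fin b → Fin n) : PartitionDiagram a b :=
  Finpartition.ofSetoid (Setoid.ker h)

lemma mem_part_kerP (h : Fin a ⊕ Fin b → Fin n) (x y : Fin a ⊕ Fin b) :
    y ∈ (kerP h).part x ↔ h x = h y :=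
  Finpartition.mem_part_ofSetoid_iff_rel

lemma compatible_iff_le (P : PartitionDiagram a b) (f : Fin a → Fin n) (g : Fin b → Fin n) :
    Compatible P f g ↔ P ≤ kerP (Sum.elim f g) := by
  set h := Sum.elim f g with hh
  constructor
  · intro hc B hB
    obtain ⟨x, hx⟩ := P.nonempty_of_mem_parts hB
    refine ⟨(kerP h).part x, (kerP h).part_mem.mpr (Finset.mem_univ x), fun y hy => ?_⟩
    rw [mem_part_kerP]
    exact hc B hB x hx y hy
  · intro hle B hB x hx y hy
    obtain ⟨C, hC, hBC⟩ := hle hB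
    obtain ⟨z, hz⟩ := (kerP h).nonempty_of_mem_parts hC
    have hCz : (kerP h).part z = C := (kerP h).part_eq_of_mem hC hz
    have hx' := (mem_part_kerP h z x).mp (hCz ▸ hBC hx)
    have hy' := (mem_part_kerP h z y).mp (hCz ▸ hBC hy)
    exact hx'.symm.trans hy'

lemma kerP_eq_iff {h h' : Fin a ⊕ Fin b → Fin n} (he : kerP h = kerP h') :
    ∀ x y, h x = h y ↔ h' x = h' y := by
  intro x y
  rw [← mem_part_kerP h, ← mem_part_kerP h', he]

lemma exists_perm {h h' : Fin a ⊕ Fin b → Fin n}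
    (hk : ∀ x y, h x = h y ↔ h' x = h' y) :
    ∃ σ : Equiv.Perm (Fin n), ∀ x, σ (h x) = h' x := by
  classical
  set φ : Set.range h → Set.range h' :=
    fun c => ⟨h' c.2.choose, Set.mem_range_self _⟩ with hφ
  have hφval : ∀ x : Fin a ⊕ Fin b, (φ ⟨h x, Set.mem_range_self x⟩ : Fin n) = h' x := by
    intro x
    have : h (Set.mem_range_self (f := h) x).choose = h x :=
      (Set.mem_range_self (f := h) x).choose_spec
    exact (hk _ _).mp this
  have hinj : Function.Injective φ := by
    rintro ⟨c1, hc1⟩ ⟨c2, hc2⟩ hc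
    have h1 : h' hc1.choose = h' hc2.choose := congrArg Subtype.val hc
    have h2 : h hc1.choose = h hc2.choose := (hk _ _).mpr h1
    have := hc1.choose_spec
    have := hc2.choose_spec
    exact Subtype.ext (by show c1 = c2; grind)
  have hsurj : Function.Surjective φ := by
    rintro ⟨v', ⟨x, rfl⟩⟩
    exact ⟨⟨h x, Set.mem_range_self x⟩, Subtype.ext (hφval x)⟩
  set e : Set.range h ≃ Set.range h' := Equiv.ofBijective φ ⟨hinj, hsurj⟩ with he
  have hcard : Fintype.card ((Set.range h)ᶜ : Set (Fin n)) =
      Fintype.card ((Set.range h')ᶜ : Set (Fin n)) := by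
    rw [Fintype.card_compl_set, Fintype.card_compl_set, Fintype.card_congr e]
  set e' : ((Set.range h)ᶜ : Set (Fin n)) ≃ ((Set.range h')ᶜ : Set (Fin n)) :=
    Fintype.equivOfCardEq hcard with he'
  refine ⟨((Equiv.Set.sumCompl (Set.range h)).symm.trans
    ((e.sumCongr e').trans (Equiv.Set.sumCompl (Set.range h')))), fun x => ?_⟩
  have h1 : (Equiv.Set.sumCompl (Set.range h)).symm (h x) =
      Sum.inl ⟨h x, Set.mem_range_self x⟩ :=
    Equiv.Set.sumCompl_symm_apply_of_mem (Set.mem_range_self x)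
  simp only [Equiv.trans_apply, h1, Equiv.sumCongr_apply, Sum.map_inl,
    Equiv.Set.sumCompl_apply_inl]
  exact hφval x

/-- The linear map with matrix entries `[ker (Sum.elim f g) = Q]`. -/
noncomputable def NQ (k : Type*) [CommRing k] (n : ℕ) {a b : ℕ}
    (Q : PartitionDiagram a b) :
    ((Fin a → Fin n) → k) →ₗ[k] ((Fin b → Fin n) → k) where
  toFun x g := ∑ f : Fin a → Fin n, if kerP (Sum.elim f g) = Q then x f else 0
  map_add' x y := by
    funext g
    simp only [Pi.add_apply]
    rw [← Finset.sum_add_distrib]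
    exact Finset.sum_congr rfl fun f _ => by split <;> simp
  map_smul' c x := by
    funext g
    simp only [Pi.smul_apply, smul_eq_mul, RingHom.id_apply]
    rw [Finset.mul_sum]
    exact Finset.sum_congr rfl fun f _ => by split <;> simp

lemma TP_eq_sum_NQ (Q : PartitionDiagram a b) :
    TP k n Q = ∑ R ∈ Finset.univ.filter (fun R => Q ≤ R), NQ k n R := by
  apply LinearMap.ext
  intro x
  funext g
  have hrhs : (∑ R ∈ Finset.univ.filter (fun R => Q ≤ R), NQ k n R) x g =
      ∑ R ∈ Finset.univ.filter (fun R => Q ≤ R), NQ k n R x g := by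
    rw [LinearMap.coe_sum, Finset.sum_apply, Finset.sum_apply]
  rw [hrhs]
  show (∑ f : Fin a → Fin n, if Compatible Q f g then x f else 0) = _
  have : ∀ R ∈ Finset.univ.filter (fun R => Q ≤ R), NQ k n R x g =
      ∑ f : Fin a → Fin n, if kerP (Sum.elim f g) = R then x f else 0 :=
    fun R _ => rfl
  rw [Finset.sum_congr rfl this, Finset.sum_comm]
  refine Finset.sum_congr rfl fun f _ => ?_
  rw [Finset.sum_ite_eq]
  have hmem : kerP (Sum.elim f g) ∈ Finset.filter (fun R => Q ≤ R) Finset.univ ↔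
      Compatible Q f g := by
    rw [Finset.mem_filter]
    simp only [Finset.mem_univ, true_and]
    exact (compatible_iff_le Q f g).symm
  by_cases hc : Compatible Q f g
  · rw [if_pos hc, if_pos (hmem.mpr hc)]
  · rw [if_neg hc, if_neg (fun hm => hc (hmem.mp hm))]

lemma NQ_mem_span (Q : PartitionDiagram a b) :
    NQ k n Q ∈ Submodule.span k
      (Set.range fun P : PartitionDiagram a b => TP k n P) := by
  have wf : WellFounded ((· > ·) : PartitionDiagram a b → PartitionDiagram a b → Prop) :=
    (Finite.to_wellFoundedGT).wf
  refine WellFounded.induction wf (C := fun Q => NQ k n Q ∈ Submodule.span k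
    (Set.range fun P : PartitionDiagram a b => TP k n P)) Q ?_
  clear Q
  intro Q IH
  have hsplit : Finset.univ.filter (fun R => Q ≤ R) =
      insert Q (Finset.univ.filter (fun R => Q < R)) := by
    ext R
    simp only [Finset.mem_filter, Finset.mem_univ, true_and, Finset.mem_insert]
    constructor
    · intro hle
      rcases eq_or_lt_of_le hle with h | h
      · exact Or.inl h.symm
      · exact Or.inr h
    · rintro (rfl | h)
      · exact le_rfl
      · exact h.le
  have hQ : NQ k n Q = TP k n Q - ∑ R ∈ Finset.univ.filter (fun R => Q < R), NQ k n R := by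
    rw [TP_eq_sum_NQ, hsplit, Finset.sum_insert (by simp [lt_irrefl])]
    abel
  rw [hQ]
  refine Submodule.sub_mem _ (Submodule.subset_span ⟨Q, rfl⟩) ?_
  refine Submodule.sum_mem _ fun R hR => ?_
  exact IH R (Finset.mem_filter.mp hR).2

lemma permMap_apply (σ : Equiv.Perm (Fin n)) (x : (Fin a → Fin n) → k)
    (f' : Fin a → Fin n) : permMap k σ x f' = x (fun i => σ⁻¹ (f' i)) := rfl

lemma permMap_single (σ : Equiv.Perm (Fin n)) (f : Fin a → Fin n) :
    permMap k σ (Pi.single f (1 : k)) = Pi.single (fun i => σ (f i)) 1 := by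
  funext f'
  rw [permMap_apply, Pi.single_apply, Pi.single_apply]
  congr 1
  simp only [eq_iff_iff]
  constructor
  · intro hh
    funext i
    have := congrFun hh i
    rw [← this]
    simp
  · intro hh
    funext i
    rw [congrFun hh i]
    simp

end Aux

/-- every `S_n`-equivariant `k`-linear map `V^{⊗a} → V^{⊗b}` is a
`k`-linear combination of the maps `T_P` (fullness of `Φ_n`). -/
theorem stmt7 (k : Type*) [CommRing k] (n a b : ℕ) (hn : 0 < n)
    (F : ((Fin a → Fin n) → k) →ₗ[k] ((Fin b → Fin n) → k))
    (hF : ∀ (σ : Equiv.Perm (Fin n)) (x : (Fin a → Fin n) → k),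
      F (permMap k σ x) = permMap k σ (F x)) :
    F ∈ Submodule.span k (Set.range fun P : PartitionDiagram a b => TP k n P) := by
  classical
  set M : (Fin a → Fin n) → (Fin b → Fin n) → k :=
    fun f g => F (Pi.single f 1) g with hMdef
  have hM : ∀ f g f' g', kerP (Sum.elim f g) = kerP (Sum.elim f' g') → M f g = M f' g' := by
    intro f g f' g' hk
    obtain ⟨σ, hσ⟩ := exists_perm (kerP_eq_iff hk)
    have hf : f' = fun i => σ (f i) := funext fun i => (hσ (Sum.inl i)).symm
    have hg : g' = fun i => σ (g i) := funext fun i => (hσ (Sum.inr i)).symm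
    have : M f' g' = F (permMap k σ (Pi.single f 1)) (fun i => σ (g i)) := by
      rw [hMdef, permMap_single, hf, hg]
    rw [this, hF σ]
    show M f g = F (Pi.single f 1) (fun i => σ⁻¹ (σ (g i)))
    simp only [Equiv.Perm.inv_def, Equiv.symm_apply_apply]
    rfl
  set c : PartitionDiagram a b → k := fun Q =>
    if hq : ∃ p : (Fin a → Fin n) × (Fin b → Fin n), kerP (Sum.elim p.1 p.2) = Q
    then M hq.choose.1 hq.choose.2 else 0 with hcdef
  have hc : ∀ f g, c (kerP (Sum.elim f g)) = M f g := by
    intro f g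
    have hq : ∃ p : (Fin a → Fin n) × (Fin b → Fin n),
        kerP (Sum.elim p.1 p.2) = kerP (Sum.elim f g) := ⟨(f, g), rfl⟩
    rw [hcdef]
    simp only [dif_pos hq]
    exact hM _ _ f g hq.choose_spec
  have hdecomp : F = ∑ Q : PartitionDiagram a b, c Q • NQ k n Q := by
    apply LinearMap.pi_ext
    intro f x
    funext g
    have hsingle : Pi.single f x = x • (Pi.single f (1 : k) : (Fin a → Fin n) → k) := by
      rw [← Pi.single_smul, smul_eq_mul, mul_one]
    have lhs : F (Pi.single f x) g = x * M f g := by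
      rw [hsingle, map_smul]
      simp [hMdef]
    rw [lhs]
    have hrhs : (∑ Q : PartitionDiagram a b, c Q • NQ k n Q) (Pi.single f x) g =
        ∑ Q : PartitionDiagram a b, c Q * (NQ k n Q (Pi.single f x) g) := by
      rw [LinearMap.coe_sum, Finset.sum_apply, Finset.sum_apply]
      exact Finset.sum_congr rfl fun Q _ => rfl
    rw [hrhs]
    have hNQ : ∀ Q : PartitionDiagram a b,
        NQ k n Q (Pi.single f x) g = if kerP (Sum.elim f g) = Q then x else 0 := by
      intro Q
      show (∑ f' : Fin a → Fin n, if kerP (Sum.elim f' g) = Q then Pi.single f x f' else 0) = _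
      rw [Finset.sum_eq_single f]
      · rw [Pi.single_eq_same]
      · intro f' _ hne
        rw [Pi.single_eq_of_ne hne, ite_self]
      · intro h; exact absurd (Finset.mem_univ f) h
    simp_rw [hNQ, mul_ite, mul_zero]
    rw [Finset.sum_ite_eq, if_pos (Finset.mem_univ _), hc, mul_comm]
  rw [hdecomp]
  exact Submodule.sum_mem _ fun Q _ =>
    Submodule.smul_mem _ _ (NQ_mem_span Q)
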